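/- Let N be a natural number, let G = ℂ^N with the standard Hermitian inner product ⟨·,·⟩ (antilinear in the first argument), and let A, B : G → G be linear maps. Set Λ = {(f,f') ∈ G × G : A f = B f'} and define the adjoint relation Λ* = {(g,g') ∈ G × G : ⟨f', g⟩ = ⟨f, g'⟩ for all (f,f') ∈ Λ}. Then Λ = Λ* if and only if A∘B* = B∘A* (where * denotes the Hilbert-space adjoint) and the linear map G × G → G given by (x,y) ↦ A x + B y is surjective. -/

import Mathlib

open LinearMap Submodule

noncomputable section AuxStmt3

variable {N : ℕ}

local notation "V" => EuclideanSpace ℂ (Fin N)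

/-- `T (x,y) = A x - B y`. -/
def auxT (A B : V →ₗ[ℂ] V) : (V × V) →ₗ[ℂ] V :=
  A ∘ₗ LinearMap.fst ℂ V V - B ∘ₗ LinearMap.snd ℂ V V

@[simp] lemma auxT_apply (A B : V →ₗ[ℂ] V) (p : V × V) :
    auxT A B p = A p.1 - B p.2 := rfl

/-- `S z = (B† z, A† z)`. -/
def auxS (A B : V →ₗ[ℂ] V) : V →ₗ[ℂ] (V × V) :=
  LinearMap.prod (adjoint B) (adjoint A)

@[simp] lemma auxS_apply (A B : V →ₗ[ℂ] V) (z : V) :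
    auxS A B z = (adjoint B z, adjoint A z) := rfl

lemma mem_kerT (A B : V →ₗ[ℂ] V) (p : V × V) :
    p ∈ LinearMap.ker (auxT A B) ↔ A p.1 = B p.2 := by
  simp [auxT, LinearMap.mem_ker, sub_eq_zero]

end AuxStmt3

/-- The relation `Λ = {(f,f') | A f = B f'}` in `ℂ^N` is self-adjoint, i.e. equal to its
adjoint relation, iff `A B* = B A*` and `(x,y) ↦ A x + B y` is surjective. -/
theorem stmt3 (N : ℕ)
    (A B : EuclideanSpace ℂ (Fin N) →ₗ[ℂ] EuclideanSpace ℂ (Fin N)) :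
    ({p : EuclideanSpace ℂ (Fin N) × EuclideanSpace ℂ (Fin N) | A p.1 = B p.2} =
      {q : EuclideanSpace ℂ (Fin N) × EuclideanSpace ℂ (Fin N) |
        ∀ p : EuclideanSpace ℂ (Fin N) × EuclideanSpace ℂ (Fin N),
          A p.1 = B p.2 → (inner ℂ p.2 q.1 : ℂ) = inner ℂ p.1 q.2}) ↔
      (A ∘ₗ LinearMap.adjoint B = B ∘ₗ LinearMap.adjoint A ∧
        Function.Surjective (fun xy : EuclideanSpace ℂ (Fin N) × EuclideanSpace ℂ (Fin N) =>
          A xy.1 + B xy.2)) := by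
  classical
  set V := EuclideanSpace ℂ (Fin N)
  set T := auxT A B with hTdef
  set S := auxS A B with hSdef
  -- `range S ⊆ Λ*` computation
  have hS_mem_adj : ∀ (z : V) (p : V × V), A p.1 = B p.2 →
      (inner ℂ p.2 (LinearMap.adjoint B z) : ℂ) = inner ℂ p.1 (LinearMap.adjoint A z) := by
    intro z p hp
    rw [LinearMap.adjoint_inner_right, LinearMap.adjoint_inner_right, hp]
  constructor
  · -- forward
    intro hset
    have hc : A ∘ₗ LinearMap.adjoint B = B ∘ₗ LinearMap.adjoint A := by
      refine LinearMap.ext fun z => ?_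
      have : (LinearMap.adjoint B z, LinearMap.adjoint A z) ∈
          {p : V × V | A p.1 = B p.2} := by
        rw [hset]; exact fun p hp => hS_mem_adj z p hp
      exact this
    refine ⟨hc, ?_⟩
    -- dimension argument via `WithLp 2 (V × V)`
    let e : WithLp 2 (V × V) ≃ₗ[ℂ] V × V := WithLp.linearEquiv 2 ℂ (V × V)
    haveI : FiniteDimensional ℂ (WithLp 2 (V × V)) := e.symm.finiteDimensional
    set M : Submodule ℂ (WithLp 2 (V × V)) := (LinearMap.ker T).comap e.toLinearMap with hM
    -- `Λ* = J(Mᗮ)` where `J (u,v) = (v, -u)`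
    have hadj : ∀ q : V × V,
        (∀ p : V × V, A p.1 = B p.2 → (inner ℂ p.2 q.1 : ℂ) = inner ℂ p.1 q.2) ↔
          e.symm (-q.2, q.1) ∈ Mᗮ := by
      intro q
      rw [Submodule.mem_orthogonal]
      constructor
      · intro hq u hu
        have hu' : A (e u).1 = B (e u).2 := (mem_kerT A B (e u)).1 hu
        have := hq (e u) hu'
        simp only [WithLp.prod_inner_apply]
        have ha : (WithLp.ofLp (e.symm (-q.2, q.1))).1 = -q.2 := rfl
        have hb : (WithLp.ofLp (e.symm (-q.2, q.1))).2 = q.1 := rfl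
        have hc1 : (e u).1 = (WithLp.ofLp u).1 := rfl
        have hc2 : (e u).2 = (WithLp.ofLp u).2 := rfl
        rw [hc1, hc2] at this
        rw [ha, hb, inner_neg_right]
        linear_combination this
      · intro hq p hp
        have hu : e.symm p ∈ M := by
          simp only [hM, Submodule.mem_comap, LinearEquiv.coe_coe,
            LinearEquiv.apply_symm_apply]
          exact (mem_kerT A B p).2 hp
        have := hq (e.symm p) hu
        simp only [WithLp.prod_inner_apply] at this
        have h1 : (WithLp.ofLp (e.symm p)).1 = p.1 := rfl
        have h2 : (WithLp.ofLp (e.symm p)).2 = p.2 := rfl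
        have ha : (WithLp.ofLp (e.symm (-q.2, q.1))).1 = -q.2 := rfl
        have hb : (WithLp.ofLp (e.symm (-q.2, q.1))).2 = q.1 := rfl
        rw [h1, h2, ha, hb, inner_neg_right] at this
        linear_combination this
    -- every element of `ker T` lies in `Λ*` (by hset), so `J⁻¹(ker T) ⊆ Mᗮ`;
    -- conversely `Mᗮ`'s image is inside `ker T`.  Conclude equality of finranks.
    -- Consider the equiv `W ≃ₗ V × V`, `u ↦ ((e u).2, -(e u).1)`, mapping `Mᗮ` onto `ker T`.
    have hsubset : ∀ q : V × V, q ∈ LinearMap.ker T ↔ e.symm (-q.2, q.1) ∈ Mᗮ := by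
      intro q
      rw [← hadj q, mem_kerT]
      constructor
      · intro h
        have : q ∈ {p : V × V | A p.1 = B p.2} := h
        rw [hset] at this; exact this
      · intro h
        have : q ∈ {q : V × V |
            ∀ p : V × V, A p.1 = B p.2 → (inner ℂ p.2 q.1 : ℂ) = inner ℂ p.1 q.2} := h
        rw [← hset] at this; exact this
    -- build the equiv `V × V ≃ₗ W`, `q ↦ e.symm (-q.2, q.1)` and transfer finranks
    let J : (V × V) →ₗ[ℂ] WithLp 2 (V × V) :=
      e.symm.toLinearMap ∘ₗ
        (LinearMap.prod (-(LinearMap.snd ℂ V V)) (LinearMap.fst ℂ V V))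
    let J' : WithLp 2 (V × V) →ₗ[ℂ] (V × V) :=
      (LinearMap.prod (LinearMap.snd ℂ V V) (-(LinearMap.fst ℂ V V))) ∘ₗ e.toLinearMap
    have hJJ' : J' ∘ₗ J = LinearMap.id := by
      apply LinearMap.ext; intro q
      simp [J, J', Prod.ext_iff]
      exact neg_neg _
    have hJ'J : J ∘ₗ J' = LinearMap.id := by
      apply LinearMap.ext; intro u
      simp [J, J', Prod.ext_iff]
      rw [neg_neg]; rfl
    let Jeq : (V × V) ≃ₗ[ℂ] WithLp 2 (V × V) := LinearEquiv.ofLinear J J' hJ'J hJJ'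
    have hmap : (LinearMap.ker T).map (Jeq : (V × V) →ₗ[ℂ] WithLp 2 (V × V)) = Mᗮ := by
      ext u
      rw [Submodule.mem_map_equiv]
      have : Jeq.symm u = ((e u).2, -(e u).1) := rfl
      rw [this]
      rw [hsubset ((e u).2, -(e u).1)]
      have : e.symm (-(-(e u).1), (e u).2) = u := by rw [neg_neg]; rfl
      rw [this]
    have hfr : Module.finrank ℂ (LinearMap.ker T) = Module.finrank ℂ Mᗮ := by
      rw [← hmap]; exact (LinearEquiv.finrank_map_eq Jeq _).symm
    have hMk : Module.finrank ℂ M = Module.finrank ℂ (LinearMap.ker T) := by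
      rw [hM, Submodule.comap_equiv_eq_map_symm]
      exact LinearEquiv.finrank_map_eq e.symm _
    have hWdim : Module.finrank ℂ (WithLp 2 (V × V)) = N + N := by
      rw [e.finrank_eq, Module.finrank_prod, finrank_euclideanSpace_fin]
    have horth : Module.finrank ℂ M + Module.finrank ℂ Mᗮ = N + N :=
      (Submodule.finrank_add_finrank_orthogonal M).trans hWdim
    -- finrank ker T = N
    have hker : Module.finrank ℂ (LinearMap.ker T) = N := by omega
    have hVVdim : Module.finrank ℂ (V × V) = N + N := by
      rw [Module.finrank_prod, finrank_euclideanSpace_fin]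
    have hrn : Module.finrank ℂ (LinearMap.range T) + Module.finrank ℂ (LinearMap.ker T)
        = N + N := (LinearMap.finrank_range_add_finrank_ker T).trans hVVdim
    have hrange : Module.finrank ℂ (LinearMap.range T) = N := by omega
    have htop : LinearMap.range T = ⊤ := by
      apply Submodule.eq_top_of_finrank_eq
      rw [hrange, finrank_euclideanSpace_fin]
    have hTsurj : Function.Surjective T := LinearMap.range_eq_top.1 htop
    intro w
    obtain ⟨p, hp⟩ := hTsurj w
    refine ⟨(p.1, -p.2), ?_⟩
    have hp' : A p.1 - B p.2 = w := hp
    show A p.1 + B (-p.2) = w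
    rw [map_neg, ← sub_eq_add_neg, hp']
  · -- backward
    rintro ⟨hc, hs⟩
    -- T surjective
    have hTsurj : Function.Surjective T := by
      intro w
      obtain ⟨p, hp⟩ := hs w
      have hp' : A p.1 + B p.2 = w := hp
      refine ⟨(p.1, -p.2), ?_⟩
      show A p.1 - B (-p.2) = w
      rw [map_neg, sub_neg_eq_add, hp']
    -- S injective
    have hSinj : LinearMap.ker S = ⊥ := by
      rw [LinearMap.ker_eq_bot']
      intro z hz
      have h1 : LinearMap.adjoint B z = 0 := congrArg Prod.fst hz
      have h2 : LinearMap.adjoint A z = 0 := congrArg Prod.snd hz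
      have : (inner ℂ z z : ℂ) = 0 := by
        obtain ⟨p, hp⟩ := hs z
        have hp' : A p.1 + B p.2 = z := hp
        calc (inner ℂ z z : ℂ) = inner ℂ (A p.1 + B p.2) z := by rw [hp']
        _ = inner ℂ p.1 (LinearMap.adjoint A z) + inner ℂ p.2 (LinearMap.adjoint B z) := by
            rw [inner_add_left, LinearMap.adjoint_inner_right, LinearMap.adjoint_inner_right]
        _ = 0 := by rw [h1, h2, inner_zero_right, inner_zero_right, add_zero]
      exact inner_self_eq_zero.1 this
    -- range S = ker T
    have hle : LinearMap.range S ≤ LinearMap.ker T := by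
      rintro _ ⟨z, rfl⟩
      rw [mem_kerT]
      have := congrFun (congrArg DFunLike.coe hc) z
      exact this
    have hVVdim : Module.finrank ℂ (V × V) = N + N := by
      rw [Module.finrank_prod, finrank_euclideanSpace_fin]
    have hrnT : Module.finrank ℂ (LinearMap.range T) + Module.finrank ℂ (LinearMap.ker T)
        = N + N := (LinearMap.finrank_range_add_finrank_ker T).trans hVVdim
    have hrangeT : Module.finrank ℂ (LinearMap.range T) = N := by
      rw [LinearMap.range_eq_top.2 hTsurj, finrank_top, finrank_euclideanSpace_fin]
    have hrnS : Module.finrank ℂ (LinearMap.range S) + Module.finrank ℂ (LinearMap.ker S)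
        = Module.finrank ℂ (EuclideanSpace ℂ (Fin N)) :=
      LinearMap.finrank_range_add_finrank_ker S
    have hkerS0 : Module.finrank ℂ (LinearMap.ker S) = 0 := by
      rw [hSinj]; exact finrank_bot ℂ _
    have hVdim : Module.finrank ℂ (EuclideanSpace ℂ (Fin N)) = N :=
      finrank_euclideanSpace_fin
    have heq : LinearMap.range S = LinearMap.ker T :=
      Submodule.eq_of_le_of_finrank_le hle (by omega)
    -- set equality
    apply Set.eq_of_subset_of_subset
    · intro p hp
      have hpk : p ∈ LinearMap.ker T := (mem_kerT A B p).2 hp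
      rw [← heq] at hpk
      obtain ⟨z, hz⟩ := hpk
      intro f hf
      have h1 : p.1 = LinearMap.adjoint B z := by rw [← hz]; rfl
      have h2 : p.2 = LinearMap.adjoint A z := by rw [← hz]; rfl
      rw [h1, h2]
      exact hS_mem_adj z f hf
    · intro q hq
      have : ∀ z : EuclideanSpace ℂ (Fin N), (inner ℂ z (A q.1) : ℂ) = inner ℂ z (B q.2) := by
        intro z
        have hz : A (LinearMap.adjoint B z) = B (LinearMap.adjoint A z) := by
          have := congrFun (congrArg DFunLike.coe hc) z
          simpa using this
        have := hq (LinearMap.adjoint B z, LinearMap.adjoint A z) hz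
        simpa [LinearMap.adjoint_inner_left] using this
      exact ext_inner_left ℂ this
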